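/- arXiv:1702.03871 — 2 statements merged into one kernel-verified Lean document; each statement's English description precedes it below -/
import Mathlib

section
/- Let 0 < R ≤ ∞ and let ψ be a quasiconcave function on [0,R). Then there exists a constant C > 0 such that C⁻¹ · (T_ψ f(t) + f**(t)) ≤ T_ψ(f**)(t) ≤ C · (T_ψ f(t) + f**(t)) for every nonnegative nonincreasing measurable function f on (0,R) and every t ∈ (0,R) if and only if ψ satisfies the B-condition. (The lower bound T_ψ f(t) + f**(t) ≤ 2·T_ψ(f**)(t) holds for every quasiconcave ψ, since f ≤ f** for nonincreasing f and g ≤ T_ψ g for continuous nonincreasing g; the content is the upper bound.) -/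
open MeasureTheory Set ENNReal Filter

noncomputable section

/-- The open interval `(0, R)` inside `ℝ`, where `R ∈ (0, ∞]` is an extended real. -/
def DomIoo (R : ℝ≥0∞) : Set ℝ := {t : ℝ | 0 < t ∧ ENNReal.ofReal t < R}

/-- The part of `(0, R)` lying strictly above `t`. -/
def DomAbove (R : ℝ≥0∞) (t : ℝ) : Set ℝ := {s : ℝ | t < s ∧ ENNReal.ofReal s < R}

/-- `φ : [0, R) → [0, ∞)` is quasiconcave: it vanishes exactly at `0`, is nondecreasing,
and `t ↦ φ(t)/t` is nonincreasing on `(0, R)`.  (Values on `(0, R)` are finite.) -/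
def QuasiConcaveOn (R : ℝ≥0∞) (φ : ℝ → ℝ≥0∞) : Prop :=
  φ 0 = 0 ∧
  (∀ t ∈ DomIoo R, 0 < φ t ∧ φ t < ⊤) ∧
  (∀ s t : ℝ, 0 ≤ s → s ≤ t → t ∈ DomIoo R → φ s ≤ φ t) ∧
  (∀ s t : ℝ, s ∈ DomIoo R → s ≤ t → t ∈ DomIoo R →
    φ t / ENNReal.ofReal t ≤ φ s / ENNReal.ofReal s)

/-- `f` is a nonnegative nonincreasing measurable function on `(0, R)`
(nonnegativity is built into the codomain `[0, ∞]`). -/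
def NonincOn (R : ℝ≥0∞) (f : ℝ → ℝ≥0∞) : Prop :=
  Measurable f ∧ ∀ s t : ℝ, s ∈ DomIoo R → s ≤ t → t ∈ DomIoo R → f t ≤ f s

/-- The level function `f**(t) = (1/t) ∫₀ᵗ f(s) ds`. -/
def dstar (f : ℝ → ℝ≥0∞) (t : ℝ) : ℝ≥0∞ :=
  (∫⁻ s in Ioo (0 : ℝ) t, f s) / ENNReal.ofReal t

/-- The supremum operator `S_φ f(t) = (1/φ(t)) ⋅ sup_{0<s<t} φ(s) f(s)`. -/
def Ssup (φ f : ℝ → ℝ≥0∞) (t : ℝ) : ℝ≥0∞ :=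
  (⨆ s ∈ Ioo (0 : ℝ) t, φ s * f s) / φ t

/-- The supremum operator `T_ψ f(t) = (1/ψ(t)) ⋅ sup_{t<s<R} ψ(s) f(s)`. -/
def Tsup (R : ℝ≥0∞) (ψ f : ℝ → ℝ≥0∞) (t : ℝ) : ℝ≥0∞ :=
  (⨆ s ∈ DomAbove R t, ψ s * f s) / ψ t

/-- The `B`-condition: `∫₀ᵗ ds/φ(s) ≤ C ⋅ t/φ(t)` on `(0, R)` for some constant `C > 0`. -/
def BCond (R : ℝ≥0∞) (φ : ℝ → ℝ≥0∞) : Prop :=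
  ∃ C : ℝ, 0 < C ∧ ∀ t ∈ DomIoo R,
    (∫⁻ s in Ioo (0 : ℝ) t, 1 / φ s) ≤ ENNReal.ofReal C * (ENNReal.ofReal t / φ t)

/-- A weight on `(0, R)`: positive, measurable and locally integrable
(with finite integral near the origin). -/
def IsWeight (R : ℝ≥0∞) (w : ℝ → ℝ≥0∞) : Prop :=
  Measurable w ∧ (∀ t ∈ DomIoo R, 0 < w t ∧ w t < ⊤) ∧
  ∀ t ∈ DomIoo R, (∫⁻ s in Ioo (0 : ℝ) t, w s) < ⊤

/-- Nontriviality of a weight `w` for the exponent `p`: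
`∫₁^∞ s^{-p} w(s) ds < ∞` when `R = ∞`, and `∫₀ᴿ s^{-p} w(s) ds = ∞` when `R < ∞`. -/
def Nontriv (R : ℝ≥0∞) (p : ℝ) (w : ℝ → ℝ≥0∞) : Prop :=
  (R = ⊤ → (∫⁻ s in Ioi (1 : ℝ), ENNReal.ofReal s ^ (-p) * w s) < ⊤) ∧
  (R ≠ ⊤ → (∫⁻ s in DomIoo R, ENNReal.ofReal s ^ (-p) * w s) = ⊤)


private lemma ofReal_pos' {t : ℝ} (ht : 0 < t) : ENNReal.ofReal t ≠ 0 := by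
  simp [ENNReal.ofReal_eq_zero, not_le, ht]

/-- If `X / ofReal s ≤ L` for all `s ∈ (t, a)`, then `X / ofReal t ≤ L`. -/
private lemma helperA {X L : ℝ≥0∞} {t a : ℝ} (ht : 0 < t) (hta : t < a)
    (h : ∀ s : ℝ, t < s → s < a → X / ENNReal.ofReal s ≤ L) :
    X / ENNReal.ofReal t ≤ L := by
  by_cases hL : L = ⊤
  · simp [hL]
  have hs0 : t < (t + a) / 2 := by linarith
  have hs0' : (t + a) / 2 < a := by linarith
  by_cases hX : X = ⊤
  · exfalso
    have := h ((t + a) / 2) hs0 hs0'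
    rw [hX, ENNReal.top_div_of_ne_top ENNReal.ofReal_ne_top] at this
    exact hL (top_le_iff.mp this)
  rw [ENNReal.div_le_iff_le_mul (Or.inl (ofReal_pos' ht)) (Or.inl ENNReal.ofReal_ne_top)]
  apply ENNReal.le_of_forall_pos_le_add
  intro ε hε hlt
  have hLt : L ≠ ⊤ := hL
  set Lr := L.toReal with hLr
  have hLr0 : 0 ≤ Lr := ENNReal.toReal_nonneg
  set m : ℝ := min ((a - t) / 2) ((ε : ℝ) / (Lr + 1)) with hm
  have hm0 : 0 < m := by
    apply lt_min
    · linarith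
    · positivity
  have hsa : t + m < a := by
    have : m ≤ (a - t) / 2 := min_le_left _ _
    linarith
  have hXs := h (t + m) (by linarith) hsa
  rw [ENNReal.div_le_iff_le_mul (Or.inl (ofReal_pos' (by linarith : (0:ℝ) < t + m)))
    (Or.inl ENNReal.ofReal_ne_top)] at hXs
  refine hXs.trans ?_
  rw [ENNReal.ofReal_add ht.le hm0.le, mul_add]
  gcongr
  have hLof : L = ENNReal.ofReal Lr := (ENNReal.ofReal_toReal hLt).symm
  calc L * ENNReal.ofReal m = ENNReal.ofReal (Lr * m) := by
        rw [hLof, ENNReal.ofReal_mul hLr0]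
    _ ≤ ENNReal.ofReal (ε : ℝ) := by
        apply ENNReal.ofReal_le_ofReal
        have hm' : m ≤ (ε : ℝ) / (Lr + 1) := min_le_right _ _
        have : Lr * m ≤ Lr * ((ε : ℝ) / (Lr + 1)) := by
          apply mul_le_mul_of_nonneg_left hm' hLr0
        refine this.trans ?_
        rw [mul_div_assoc'] 
        rw [div_le_iff₀ (by linarith)]
        have hε' : (0:ℝ) ≤ ε := ε.2
        nlinarith
    _ = (ε : ℝ≥0∞) := ENNReal.ofReal_coe_nnreal

/-- If `X ≤ A + B * ofReal δ` for all small `δ > 0` (with `A, B` finite), then `X ≤ A`. -/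
private lemma helperB {X A B : ℝ≥0∞} {δ₀ : ℝ} (hA : A ≠ ⊤) (hB : B ≠ ⊤) (hδ₀ : 0 < δ₀)
    (h : ∀ δ : ℝ, 0 < δ → δ < δ₀ → X ≤ A + B * ENNReal.ofReal δ) : X ≤ A := by
  apply ENNReal.le_of_forall_pos_le_add
  intro ε hε _
  set Br := B.toReal with hBr
  have hBr0 : 0 ≤ Br := ENNReal.toReal_nonneg
  set δ : ℝ := min (δ₀ / 2) ((ε : ℝ) / (Br + 1)) with hδ
  have hδpos : 0 < δ := by
    apply lt_min
    · linarith
    · positivity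
  have := h δ hδpos (by
    have : δ ≤ δ₀ / 2 := min_le_left _ _
    linarith)
  refine this.trans ?_
  gcongr
  have hBof : B = ENNReal.ofReal Br := (ENNReal.ofReal_toReal hB).symm
  calc B * ENNReal.ofReal δ = ENNReal.ofReal (Br * δ) := by
        rw [hBof, ENNReal.ofReal_mul hBr0]
    _ ≤ ENNReal.ofReal (ε : ℝ) := by
        apply ENNReal.ofReal_le_ofReal
        have hδ' : δ ≤ (ε : ℝ) / (Br + 1) := min_le_right _ _
        have : Br * δ ≤ Br * ((ε : ℝ) / (Br + 1)) :=
          mul_le_mul_of_nonneg_left hδ' hBr0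
        refine this.trans ?_
        rw [mul_div_assoc', div_le_iff₀ (by linarith)]
        have hε' : (0:ℝ) ≤ ε := ε.2
        nlinarith
    _ = (ε : ℝ≥0∞) := ENNReal.ofReal_coe_nnreal

-- membership basics
private lemma domAbove_subset {R : ℝ≥0∞} {t s : ℝ} (ht : t ∈ DomIoo R)
    (hs : s ∈ DomAbove R t) : s ∈ DomIoo R :=
  ⟨ht.1.trans hs.1, hs.2⟩

private lemma mem_DomIoo_of_mem_Ioo {R : ℝ≥0∞} {t u : ℝ} (ht : t ∈ DomIoo R)
    (hu : u ∈ Ioo (0:ℝ) t) : u ∈ DomIoo R :=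
  ⟨hu.1, lt_of_le_of_lt (ENNReal.ofReal_le_ofReal hu.2.le) ht.2⟩

/-- there is some point of `(0,R)` above `t` and below any chosen bound -/
private lemma exists_above {R : ℝ≥0∞} {t : ℝ} (ht : t ∈ DomIoo R) :
    ∃ a : ℝ, t < a ∧ a ∈ DomIoo R := by
  rcases eq_or_ne R ⊤ with hR | hR
  · exact ⟨t + 1, by linarith [ht.1], ⟨by linarith [ht.1], by simp [hR]⟩⟩
  · have h2 : t < R.toReal :=
      (ENNReal.ofReal_lt_iff_lt_toReal ht.1.le hR).mp ht.2
    refine ⟨(t + R.toReal) / 2, by linarith, ⟨by linarith [ht.1], ?_⟩⟩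
    have : (t + R.toReal) / 2 < R.toReal := by linarith
    calc ENNReal.ofReal ((t + R.toReal) / 2) < ENNReal.ofReal R.toReal := by
          exact (ENNReal.ofReal_lt_ofReal_iff_of_nonneg (by linarith [ht.1])).mpr this
      _ ≤ R := ENNReal.ofReal_toReal_le

/-- `f s ≤ f** s` for nonincreasing `f`. -/
private lemma f_le_dstar {R : ℝ≥0∞} {f : ℝ → ℝ≥0∞} (hf : NonincOn R f)
    {s : ℝ} (hs : s ∈ DomIoo R) : f s ≤ dstar f s := by
  have hconst : f s * ENNReal.ofReal s ≤ ∫⁻ u in Ioo (0:ℝ) s, f u := by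
    have : ∫⁻ u in Ioo (0:ℝ) s, f s = f s * ENNReal.ofReal s := by
      rw [setLIntegral_const, Real.volume_Ioo, sub_zero]
    rw [← this]
    apply setLIntegral_mono hf.1
    intro u hu
    exact hf.2 u s (mem_DomIoo_of_mem_Ioo hs hu) hu.2.le hs
  simp only [dstar]
  rw [ENNReal.le_div_iff_mul_le (Or.inl (ofReal_pos' hs.1)) (Or.inl ENNReal.ofReal_ne_top)]
  exact hconst



private lemma lowerB {R : ℝ≥0∞} {ψ : ℝ → ℝ≥0∞} (hψ : QuasiConcaveOn R ψ)
    {f : ℝ → ℝ≥0∞} (hf : NonincOn R f) {t : ℝ} (ht : t ∈ DomIoo R) :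
    Tsup R ψ f t + dstar f t ≤ 2 * Tsup R ψ (dstar f) t := by
  obtain ⟨hψ0, hψfin, hψmono, hψqc⟩ := hψ
  have hψt0 : ψ t ≠ 0 := (hψfin t ht).1.ne'
  have hψtt : ψ t ≠ ⊤ := (hψfin t ht).2.ne
  have h1 : Tsup R ψ f t ≤ Tsup R ψ (dstar f) t := by
    apply ENNReal.div_le_div_right
    apply iSup₂_le
    intro s hs
    refine le_iSup₂_of_le s hs ?_
    exact mul_le_mul_right (f_le_dstar hf (domAbove_subset ht hs)) _
  have h2 : dstar f t ≤ Tsup R ψ (dstar f) t := by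
    set S := ⨆ s ∈ DomAbove R t, ψ s * dstar f s with hS
    set I := ∫⁻ u in Ioo (0:ℝ) t, f u with hI
    obtain ⟨a, hta, haD⟩ := exists_above ht
    have key : ∀ s : ℝ, t < s → s < a → (ψ t * I) / ENNReal.ofReal s ≤ S := by
      intro s hts hsa
      have hsD : s ∈ DomIoo R :=
        ⟨ht.1.trans hts, lt_of_le_of_lt (ENNReal.ofReal_le_ofReal hsa.le) haD.2⟩
      have hs' : s ∈ DomAbove R t := ⟨hts, hsD.2⟩
      have hle : (ψ t * I) / ENNReal.ofReal s ≤ ψ s * dstar f s := by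
        rw [mul_div_assoc]
        have hI' : I / ENNReal.ofReal s ≤ dstar f s := by
          apply ENNReal.div_le_div_right
          exact lintegral_mono_set (Ioo_subset_Ioo le_rfl hts.le)
        calc ψ t * (I / ENNReal.ofReal s) ≤ ψ s * (I / ENNReal.ofReal s) := by
              exact mul_le_mul_left (hψmono t s ht.1.le hts.le hsD) _
          _ ≤ ψ s * dstar f s := mul_le_mul_right hI' _
      exact hle.trans (le_iSup₂_of_le s hs' le_rfl)
    have hmain : (ψ t * I) / ENNReal.ofReal t ≤ S := helperA ht.1 hta key
    have : ψ t * dstar f t ≤ S := by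
      simpa [dstar, mul_div_assoc] using hmain
    rw [show Tsup R ψ (dstar f) t = S / ψ t from rfl,
      ENNReal.le_div_iff_mul_le (Or.inl hψt0) (Or.inl hψtt), mul_comm]
    exact this
  calc Tsup R ψ f t + dstar f t ≤ Tsup R ψ (dstar f) t + Tsup R ψ (dstar f) t :=
        add_le_add h1 h2
    _ = 2 * Tsup R ψ (dstar f) t := (two_mul _).symm



private lemma upperOfB {R : ℝ≥0∞} {ψ : ℝ → ℝ≥0∞} (hψ : QuasiConcaveOn R ψ) {CB : ℝ}
    (hCB : 0 < CB)
    (hB : ∀ t ∈ DomIoo R,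
      (∫⁻ s in Ioo (0 : ℝ) t, 1 / ψ s) ≤ ENNReal.ofReal CB * (ENNReal.ofReal t / ψ t))
    {f : ℝ → ℝ≥0∞} (hf : NonincOn R f) {t : ℝ} (ht : t ∈ DomIoo R) :
    Tsup R ψ (dstar f) t ≤ dstar f t + ENNReal.ofReal CB * Tsup R ψ f t := by
  obtain ⟨hψ0, hψfin, hψmono, hψqc⟩ := hψ
  have hψt0 : ψ t ≠ 0 := (hψfin t ht).1.ne'
  have hψtt : ψ t ≠ ⊤ := (hψfin t ht).2.ne
  set CB' := ENNReal.ofReal CB with hCB'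
  set Sup := ⨆ u ∈ DomAbove R t, ψ u * f u with hSup
  by_cases hSupTop : Sup = ⊤
  · have : Tsup R ψ f t = ⊤ := by
      rw [show Tsup R ψ f t = Sup / ψ t from rfl, hSupTop,
        ENNReal.top_div_of_ne_top hψtt]
    rw [this, ENNReal.mul_top (by simp [hCB', ENNReal.ofReal_eq_zero, not_le, hCB])]
    simp
  have main : ∀ s ∈ DomAbove R t, ψ s * dstar f s ≤ ψ t * dstar f t + CB' * Sup := by
    intro s hs
    have hsD : s ∈ DomIoo R := domAbove_subset ht hs
    have hψs0 : ψ s ≠ 0 := (hψfin s hsD).1.ne'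
    have hψst : ψ s ≠ ⊤ := (hψfin s hsD).2.ne
    have hofs0 : ENNReal.ofReal s ≠ 0 := ofReal_pos' hsD.1
    set I := ∫⁻ u in Ioo (0:ℝ) t, f u with hI
    set J := ∫⁻ u in Ico t s, f u with hJ
    have hsplit : (∫⁻ u in Ioo (0:ℝ) s, f u) = I + J := by
      rw [← Ioo_union_Ico_eq_Ioo ht.1 hs.1.le]
      exact lintegral_union measurableSet_Ico
        (Set.disjoint_left.mpr fun u hu hu' => absurd hu.2 (not_lt.mpr hu'.1))
    have hd : ψ s * dstar f s
        = ψ s * (I / ENNReal.ofReal s) + ψ s * (J / ENNReal.ofReal s) := by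
      simp only [dstar, hsplit, ENNReal.add_div, mul_add]
    have hterm1 : ψ s * (I / ENNReal.ofReal s) ≤ ψ t * dstar f t := by
      have e1 : ψ s * (I / ENNReal.ofReal s) = ψ s / ENNReal.ofReal s * I := by
        rw [div_eq_mul_inv, div_eq_mul_inv]; ring
      have e2 : ψ t * dstar f t = ψ t / ENNReal.ofReal t * I := by
        simp only [dstar]
        rw [div_eq_mul_inv, div_eq_mul_inv]; ring
      rw [e1, e2]
      exact mul_le_mul_left (hψqc t s ht hs.1.le hsD) I
    have hterm2 : ψ s * (J / ENNReal.ofReal s) ≤ CB' * Sup := by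
      have hJ' : J ≤ Sup * ∫⁻ u in Ioo t s, 1 / ψ u := by
        have e : J = ∫⁻ u in Ioo t s, f u :=
          (setLIntegral_congr (Ioo_ae_eq_Ico (a := t) (b := s))).symm
        rw [e, ← lintegral_const_mul' _ _ hSupTop,
          ← lintegral_indicator measurableSet_Ioo, ← lintegral_indicator measurableSet_Ioo]
        apply lintegral_mono
        intro u
        by_cases hu : u ∈ Ioo t s
        · rw [Set.indicator_of_mem hu, Set.indicator_of_mem hu]
          have huD : u ∈ DomIoo R :=
            ⟨ht.1.trans hu.1, lt_of_le_of_lt (ENNReal.ofReal_le_ofReal hu.2.le) hsD.2⟩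
          have huA : u ∈ DomAbove R t := ⟨hu.1, huD.2⟩
          have h1 : ψ u * f u ≤ Sup := le_iSup₂_of_le u huA le_rfl
          have hψu0 : ψ u ≠ 0 := (hψfin u huD).1.ne'
          have hψut : ψ u ≠ ⊤ := (hψfin u huD).2.ne
          rw [one_div, ← div_eq_mul_inv,
            ENNReal.le_div_iff_mul_le (Or.inl hψu0) (Or.inl hψut), mul_comm]
          exact h1
        · rw [Set.indicator_of_notMem hu, Set.indicator_of_notMem hu]
      have hJ'' : J ≤ Sup * (CB' * (ENNReal.ofReal s / ψ s)) := by
        refine hJ'.trans ?_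
        apply mul_le_mul_right
        refine (lintegral_mono_set (Ioo_subset_Ioo (le_of_lt ht.1) le_rfl)).trans ?_
        exact hB s hsD
      refine (mul_le_mul_right (ENNReal.div_le_div_right hJ'' _) _).trans ?_
      have hcalc : ψ s * (Sup * (CB' * (ENNReal.ofReal s / ψ s)) / ENNReal.ofReal s)
          = CB' * Sup := by
        rw [div_eq_mul_inv, div_eq_mul_inv]
        calc ψ s * (Sup * (CB' * (ENNReal.ofReal s * (ψ s)⁻¹)) * (ENNReal.ofReal s)⁻¹)
            = CB' * Sup * (ψ s * (ψ s)⁻¹) * (ENNReal.ofReal s * (ENNReal.ofReal s)⁻¹) := by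
              ring
          _ = CB' * Sup := by
              rw [ENNReal.mul_inv_cancel hψs0 hψst,
                ENNReal.mul_inv_cancel hofs0 ENNReal.ofReal_ne_top, mul_one, mul_one]
      rw [hcalc]
    calc ψ s * dstar f s = _ := hd
      _ ≤ ψ t * dstar f t + CB' * Sup := add_le_add hterm1 hterm2
  have hnum : (⨆ s ∈ DomAbove R t, ψ s * dstar f s) ≤ ψ t * dstar f t + CB' * Sup :=
    iSup₂_le main
  calc Tsup R ψ (dstar f) t ≤ (ψ t * dstar f t + CB' * Sup) / ψ t :=
        ENNReal.div_le_div_right hnum _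
    _ = dstar f t + CB' * Tsup R ψ f t := by
        rw [ENNReal.add_div, mul_comm (ψ t), mul_div_assoc,
          ENNReal.div_self hψt0 hψtt, mul_one, mul_div_assoc]
        rfl



private lemma necessity {R : ℝ≥0∞} {ψ : ℝ → ℝ≥0∞} (hψ : QuasiConcaveOn R ψ)
    {C : ℝ} (hC : 0 < C)
    (h : ∀ f : ℝ → ℝ≥0∞, NonincOn R f → ∀ t ∈ DomIoo R,
      Tsup R ψ (dstar f) t ≤ ENNReal.ofReal C * (Tsup R ψ f t + dstar f t)) :
    BCond R ψ := by
  obtain ⟨hψ0, hψfin, hψmono, hψqc⟩ := hψ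
  refine ⟨2 * C, by positivity, ?_⟩
  intro w hw
  obtain ⟨a, hwa, haD⟩ := exists_above hw
  have ha0 : 0 < a := hw.1.trans hwa
  have hψw0 : ψ w ≠ 0 := (hψfin w hw).1.ne'
  have hψwt : ψ w ≠ ⊤ := (hψfin w hw).2.ne
  -- Step 1 : integral bound away from the origin
  have step1 : ∀ ε : ℝ, 0 < ε → ε < w →
      (∫⁻ u in Ioo ε w, 1 / ψ u) ≤ ENNReal.ofReal (2 * C) * (ENNReal.ofReal w / ψ w) := by
    intro ε hε hεw
    have hεa : ε < a := hεw.trans hwa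
    have hεD : ε ∈ DomIoo R := ⟨hε, lt_of_le_of_lt (ENNReal.ofReal_le_ofReal hεw.le) hw.2⟩
    have hψε0 : ψ ε ≠ 0 := (hψfin ε hεD).1.ne'
    have hψεt : ψ ε ≠ ⊤ := (hψfin ε hεD).2.ne
    set g : ℝ → ℝ≥0∞ := fun u => ψ (min (max u ε) a) with hg
    have hclamp_mem : ∀ u : ℝ, min (max u ε) a ∈ DomIoo R := fun u =>
      ⟨lt_min (lt_of_lt_of_le hε (le_max_right _ _)) ha0,
        lt_of_le_of_lt (ENNReal.ofReal_le_ofReal (min_le_right _ _)) haD.2⟩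
    have hgmono : Monotone g := fun x y hxy =>
      hψmono _ _ (le_of_lt (hclamp_mem x).1)
        (min_le_min (max_le_max hxy le_rfl) le_rfl) (hclamp_mem y)
    set f : ℝ → ℝ≥0∞ := (Iio a).indicator (fun u => (g u)⁻¹) with hf
    have hfm : Measurable f := (hgmono.measurable.inv).indicator measurableSet_Iio
    have hfmono : NonincOn R f := by
      refine ⟨hfm, ?_⟩
      intro x y hx hxy hy
      by_cases hya : y < a
      · rw [hf, Set.indicator_of_mem (show y ∈ Iio a from hya),
          Set.indicator_of_mem (show x ∈ Iio a from lt_of_le_of_lt hxy hya)]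
        exact ENNReal.inv_le_inv.mpr (hgmono hxy)
      · rw [hf, Set.indicator_of_notMem (show y ∉ Iio a from hya)]
        exact zero_le
    have hgε : ∀ u : ℝ, ψ ε ≤ g u := fun u =>
      hψmono ε _ hε.le (le_min (le_max_right _ _) hεa.le) (hclamp_mem u)
    have hfu_eq : ∀ u : ℝ, ε < u → u < a → f u = (ψ u)⁻¹ := by
      intro u h1 h2
      rw [hf, Set.indicator_of_mem (show u ∈ Iio a from h2)]
      simp only [hg, max_eq_left h1.le, min_eq_left h2.le]
    have hfu_le : ∀ u : ℝ, f u ≤ (ψ ε)⁻¹ := by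
      intro u
      by_cases hu : u ∈ Iio a
      · rw [hf, Set.indicator_of_mem hu]
        exact ENNReal.inv_le_inv.mpr (hgε u)
      · rw [hf, Set.indicator_of_notMem hu]; exact zero_le
    -- the per-`t` estimate, with `t = ε + ε δ`
    have key : ∀ δ : ℝ, 0 < δ → δ < (w - ε) / ε →
        ψ w * dstar f w ≤ 2 * ENNReal.ofReal C + ENNReal.ofReal C * ENNReal.ofReal δ := by
      intro δ hδ hδw
      set t := ε + ε * δ with hts
      have hεt : ε < t := by
        have : 0 < ε * δ := by positivity
        simp only [hts]; linarith
      have htw : t < w := by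
        have h1 : δ * ε < w - ε := (lt_div_iff₀ hε).mp hδw
        simp only [hts]; nlinarith
      have htD : t ∈ DomIoo R := ⟨hε.trans hεt, lt_of_le_of_lt (ENNReal.ofReal_le_ofReal htw.le) hw.2⟩
      have hψt0 : ψ t ≠ 0 := (hψfin t htD).1.ne'
      have hψtt : ψ t ≠ ⊤ := (hψfin t htD).2.ne
      have hup := h f hfmono t htD
      have hsup1 : (⨆ u ∈ DomAbove R t, ψ u * f u) = 1 := by
        apply le_antisymm
        · apply iSup₂_le
          intro u hu
          by_cases hua : u < a
          · have huD : u ∈ DomIoo R := domAbove_subset htD hu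
            rw [hfu_eq u (hεt.trans hu.1) hua,
              ENNReal.mul_inv_cancel (hψfin u huD).1.ne' (hψfin u huD).2.ne]
          · rw [hf, Set.indicator_of_notMem (show u ∉ Iio a from hua), mul_zero]
            exact zero_le_one
        · have hu0D : (t + w) / 2 ∈ DomIoo R :=
            ⟨by linarith [htD.1], lt_of_le_of_lt (ENNReal.ofReal_le_ofReal (by linarith)) hw.2⟩
          refine le_iSup₂_of_le ((t + w) / 2) ⟨by linarith, hu0D.2⟩ ?_
          rw [hfu_eq _ (by linarith) (by linarith),
            ENNReal.mul_inv_cancel (hψfin _ hu0D).1.ne' (hψfin _ hu0D).2.ne]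
      have hTf : Tsup R ψ f t = 1 / ψ t := by
        rw [show Tsup R ψ f t = (⨆ u ∈ DomAbove R t, ψ u * f u) / ψ t from rfl, hsup1]
      have hdt : dstar f t ≤ (ψ ε)⁻¹ := by
        have hb : (∫⁻ u in Ioo (0:ℝ) t, f u) ≤ (ψ ε)⁻¹ * ENNReal.ofReal t := by
          calc (∫⁻ u in Ioo (0:ℝ) t, f u) ≤ ∫⁻ _ in Ioo (0:ℝ) t, (ψ ε)⁻¹ :=
                lintegral_mono fun u => hfu_le u
            _ = (ψ ε)⁻¹ * ENNReal.ofReal t := by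
                rw [setLIntegral_const, Real.volume_Ioo, sub_zero]
        simp only [dstar]
        rw [ENNReal.div_le_iff_le_mul (Or.inl (ofReal_pos' htD.1)) (Or.inl ENNReal.ofReal_ne_top)]
        exact hb
      have hψtd : ψ t * dstar f t ≤ ENNReal.ofReal (t / ε) := by
        have h1 : ψ t ≤ ψ ε / ENNReal.ofReal ε * ENNReal.ofReal t := by
          have h2 := hψqc ε t hεD hεt.le htD
          rwa [ENNReal.div_le_iff_le_mul (Or.inl (ofReal_pos' htD.1))
            (Or.inl ENNReal.ofReal_ne_top)] at h2
        calc ψ t * dstar f t ≤ (ψ ε / ENNReal.ofReal ε * ENNReal.ofReal t) * (ψ ε)⁻¹ :=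
              mul_le_mul' h1 hdt
          _ = (ENNReal.ofReal t / ENNReal.ofReal ε) * (ψ ε * (ψ ε)⁻¹) := by
              rw [div_eq_mul_inv, div_eq_mul_inv]; ring
          _ = ENNReal.ofReal t / ENNReal.ofReal ε := by
              rw [ENNReal.mul_inv_cancel hψε0 hψεt, mul_one]
          _ = ENNReal.ofReal (t / ε) := (ENNReal.ofReal_div_of_pos hε).symm
      have hwA : w ∈ DomAbove R t := ⟨htw, hw.2⟩
      have hchain : ψ w * dstar f w ≤ ENNReal.ofReal C * (1 + ψ t * dstar f t) := by
        have h1 : ψ w * dstar f w ≤ Tsup R ψ (dstar f) t * ψ t := by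
          rw [show Tsup R ψ (dstar f) t = (⨆ s ∈ DomAbove R t, ψ s * dstar f s) / ψ t from rfl,
            ENNReal.div_mul_cancel hψt0 hψtt]
          exact le_iSup₂_of_le w hwA le_rfl
        have h2 : Tsup R ψ (dstar f) t * ψ t
            ≤ ENNReal.ofReal C * (1 / ψ t + dstar f t) * ψ t :=
          mul_le_mul_left (by rw [← hTf]; exact hup) _
        have h3 : ENNReal.ofReal C * (1 / ψ t + dstar f t) * ψ t
            = ENNReal.ofReal C * (1 + ψ t * dstar f t) := by
          rw [one_div, mul_assoc, add_mul, ENNReal.inv_mul_cancel hψt0 hψtt, mul_comm (dstar f t)]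
        exact h1.trans (h2.trans_eq h3)
      have hte : t / ε = 1 + δ := by
        field_simp [hts]
        ring
      calc ψ w * dstar f w ≤ ENNReal.ofReal C * (1 + ψ t * dstar f t) := hchain
        _ ≤ ENNReal.ofReal C * (1 + ENNReal.ofReal (1 + δ)) := by
            rw [← hte]; exact mul_le_mul_right (add_le_add_right hψtd _) _
        _ = 2 * ENNReal.ofReal C + ENNReal.ofReal C * ENNReal.ofReal δ := by
            rw [ENNReal.ofReal_add (by norm_num) hδ.le, ENNReal.ofReal_one, mul_add, mul_add,
              mul_one]
            ring
    -- let `δ → 0`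
    have hwfin : ψ w * dstar f w ≤ 2 * ENNReal.ofReal C :=
      helperB (ENNReal.mul_ne_top (by simp) ENNReal.ofReal_ne_top) ENNReal.ofReal_ne_top
        (div_pos (by linarith) hε) key
    -- lower bound for `dstar f w`
    have hdw : (∫⁻ u in Ioo ε w, 1 / ψ u) / ENNReal.ofReal w ≤ dstar f w := by
      apply ENNReal.div_le_div_right
      calc (∫⁻ u in Ioo ε w, 1 / ψ u) = ∫⁻ u in Ioo ε w, f u := by
            apply setLIntegral_congr_fun measurableSet_Ioo
            intro u hu
            rw [hfu_eq u hu.1 (hu.2.trans hwa)]; exact one_div _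
        _ ≤ ∫⁻ u in Ioo (0:ℝ) w, f u := lintegral_mono_set (Ioo_subset_Ioo hε.le le_rfl)
    have hfinal : ψ w * ((∫⁻ u in Ioo ε w, 1 / ψ u) / ENNReal.ofReal w)
        ≤ 2 * ENNReal.ofReal C :=
      le_trans (mul_le_mul_right hdw _) hwfin
    rw [mul_comm] at hfinal
    have h5 : (∫⁻ u in Ioo ε w, 1 / ψ u) / ENNReal.ofReal w ≤ (2 * ENNReal.ofReal C) / ψ w :=
      (ENNReal.le_div_iff_mul_le (Or.inl hψw0) (Or.inl hψwt)).mpr hfinal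
    have h6 : (∫⁻ u in Ioo ε w, 1 / ψ u) ≤ (2 * ENNReal.ofReal C) / ψ w * ENNReal.ofReal w :=
      (ENNReal.div_le_iff_le_mul (Or.inl (ofReal_pos' hw.1)) (Or.inl ENNReal.ofReal_ne_top)).mp h5
    refine h6.trans_eq ?_
    rw [ENNReal.ofReal_mul (by norm_num : (0:ℝ) ≤ 2), ENNReal.ofReal_ofNat,
      div_eq_mul_inv, div_eq_mul_inv]
    ring
  -- Step 2 : monotone convergence to reach the origin
  set G : ℝ → ℝ≥0∞ := fun u => ψ (min (max u 0) w) with hG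
  have hGmono : Monotone G := by
    intro x y hxy
    have hcy : 0 ≤ min (max y 0) w := le_min (le_max_right _ _) hw.1.le
    rcases eq_or_lt_of_le hcy with hcy0 | hcy0
    · have hcx : min (max x 0) w ≤ 0 :=
        le_trans (min_le_min (max_le_max hxy le_rfl) le_rfl) hcy0.ge
      have hcx0 : min (max x 0) w = 0 :=
        le_antisymm hcx (le_min (le_max_right _ _) hw.1.le)
      simp only [hG, hcx0, ← hcy0]
      exact le_rfl
    · exact hψmono _ _ (le_min (le_max_right _ _) hw.1.le)
        (min_le_min (max_le_max hxy le_rfl) le_rfl)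
        ⟨hcy0, lt_of_le_of_lt (ENNReal.ofReal_le_ofReal (min_le_right _ _)) hw.2⟩
  have hGinv : Measurable fun u => 1 / G u := by
    simp only [one_div]; exact hGmono.measurable.inv
  have hGeq : ∀ u ∈ Ioo (0:ℝ) w, (1:ℝ≥0∞) / ψ u = 1 / G u := by
    intro u hu
    simp only [hG, max_eq_left hu.1.le, min_eq_left hu.2.le]
  rw [setLIntegral_congr_fun measurableSet_Ioo hGeq]
  set F : ℕ → ℝ → ℝ≥0∞ := fun n => (Ioo (w / (n + 2)) w).indicator (fun u => 1 / G u) with hF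
  have hFmeas : ∀ n, Measurable (F n) := fun n => hGinv.indicator measurableSet_Ioo
  have hFmono : Monotone F := by
    intro m n hmn
    apply Set.indicator_le_indicator_of_subset
    · apply Ioo_subset_Ioo _ le_rfl
      have hcast : (m : ℝ) ≤ (n : ℝ) := by exact_mod_cast hmn
      gcongr
      all_goals first | exact hw.1.le | positivity | linarith
    · exact fun _ => zero_le
  have hFsup : ∀ u : ℝ, (Ioo (0:ℝ) w).indicator (fun u => 1 / G u) u = ⨆ n, F n u := by
    intro u
    by_cases hu : u ∈ Ioo (0:ℝ) w
    · rw [Set.indicator_of_mem hu]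
      obtain ⟨n, hn⟩ := exists_nat_gt (w / u)
      have hnu : w / (n + 2) < u := by
        rw [div_lt_iff₀ (by positivity)]
        have h1 : w < n * u := by
          rw [div_lt_iff₀ hu.1] at hn
          linarith
        nlinarith [hu.1]
      refine le_antisymm (le_iSup_of_le n ?_) (iSup_le fun m => ?_)
      · simp only [hF]
        rw [Set.indicator_of_mem (show u ∈ Ioo (w / ((n:ℝ) + 2)) w from ⟨hnu, hu.2⟩)]
      · by_cases hm : u ∈ Ioo (w / ((m:ℝ) + 2)) w
        · simp only [hF]
          rw [Set.indicator_of_mem hm]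
        · simp only [hF]
          rw [Set.indicator_of_notMem hm]
          exact zero_le
    · rw [Set.indicator_of_notMem hu]
      have hz : ∀ n : ℕ, F n u = 0 := by
        intro n
        simp only [hF]
        apply Set.indicator_of_notMem
        intro hmem
        exact hu ⟨lt_trans (div_pos hw.1 (by positivity)) hmem.1, hmem.2⟩
      simp [hz]
  calc (∫⁻ u in Ioo (0:ℝ) w, 1 / G u)
      = ∫⁻ u, (Ioo (0:ℝ) w).indicator (fun u => 1 / G u) u :=
        (lintegral_indicator measurableSet_Ioo _).symm
    _ = ∫⁻ u, ⨆ n, F n u := by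
        apply lintegral_congr
        exact hFsup
    _ = ⨆ n, ∫⁻ u, F n u := lintegral_iSup hFmeas hFmono
    _ = ⨆ n : ℕ, ∫⁻ u in Ioo (w / ((n:ℝ) + 2)) w, 1 / G u := by
        refine iSup_congr fun n => ?_
        simp only [hF]
        rw [lintegral_indicator measurableSet_Ioo]
    _ = ⨆ n : ℕ, ∫⁻ u in Ioo (w / ((n:ℝ) + 2)) w, 1 / ψ u := by
        refine iSup_congr fun n => ?_
        apply setLIntegral_congr_fun measurableSet_Ioo
        intro u hu
        exact (hGeq u ⟨lt_trans (div_pos hw.1 (by positivity)) hu.1, hu.2⟩).symm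
    _ ≤ ENNReal.ofReal (2 * C) * (ENNReal.ofReal w / ψ w) := by
        refine iSup_le fun n => step1 _ (div_pos hw.1 (by positivity)) ?_
        apply div_lt_self hw.1
        have : (0:ℝ) ≤ (n : ℝ) := Nat.cast_nonneg n
        linarith


/-- `T_ψ(f**) ≃ T_ψ f + f**` holds for all nonneg. nonincreasing `f` iff `ψ ∈ B`;
the lower bound `T_ψ f + f** ≤ 2 ⋅ T_ψ(f**)` holds for every quasiconcave `ψ`. -/
theorem statement8 (R : ℝ≥0∞) (hR : 0 < R) (ψ : ℝ → ℝ≥0∞)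
    (hψ : QuasiConcaveOn R ψ) :
    ((∃ C : ℝ, 0 < C ∧ ∀ f : ℝ → ℝ≥0∞, NonincOn R f → ∀ t ∈ DomIoo R,
        (ENNReal.ofReal C)⁻¹ * (Tsup R ψ f t + dstar f t) ≤ Tsup R ψ (dstar f) t ∧
        Tsup R ψ (dstar f) t ≤ ENNReal.ofReal C * (Tsup R ψ f t + dstar f t)) ↔
      BCond R ψ) ∧
    (∀ f : ℝ → ℝ≥0∞, NonincOn R f → ∀ t ∈ DomIoo R,
      Tsup R ψ f t + dstar f t ≤ 2 * Tsup R ψ (dstar f) t) := by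
  refine ⟨?_, fun f hf t ht => lowerB hψ hf ht⟩
  constructor
  · rintro ⟨C, hC, h⟩
    exact necessity hψ hC fun f hf t ht => (h f hf t ht).2
  · rintro ⟨CB, hCB, hB⟩
    refine ⟨CB + 2, by linarith, ?_⟩
    intro f hf t ht
    have hC0 : ENNReal.ofReal (CB + 2) ≠ 0 := by
      simp only [ne_eq, ENNReal.ofReal_eq_zero, not_le]
      linarith
    have hC2 : (2 : ℝ≥0∞) ≤ ENNReal.ofReal (CB + 2) := by
      rw [show (2 : ℝ≥0∞) = ENNReal.ofReal 2 from (ENNReal.ofReal_ofNat 2).symm]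
      exact ENNReal.ofReal_le_ofReal (by linarith)
    constructor
    · have h1 := lowerB hψ hf ht
      have h2 : Tsup R ψ f t + dstar f t
          ≤ ENNReal.ofReal (CB + 2) * Tsup R ψ (dstar f) t :=
        h1.trans (mul_le_mul_left hC2 _)
      calc (ENNReal.ofReal (CB + 2))⁻¹ * (Tsup R ψ f t + dstar f t)
          ≤ (ENNReal.ofReal (CB + 2))⁻¹
            * (ENNReal.ofReal (CB + 2) * Tsup R ψ (dstar f) t) :=
            mul_le_mul_right h2 _
        _ = Tsup R ψ (dstar f) t := by
            rw [← mul_assoc, ENNReal.inv_mul_cancel hC0 ENNReal.ofReal_ne_top, one_mul]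
    · have h1 := upperOfB hψ hCB hB hf ht
      refine h1.trans ?_
      have hCB' : ENNReal.ofReal CB ≤ ENNReal.ofReal (CB + 2) :=
        ENNReal.ofReal_le_ofReal (by linarith)
      have h2 : (1 : ℝ≥0∞) ≤ ENNReal.ofReal (CB + 2) := le_trans (by norm_num) hC2
      calc dstar f t + ENNReal.ofReal CB * Tsup R ψ f t
          ≤ ENNReal.ofReal (CB + 2) * dstar f t
            + ENNReal.ofReal (CB + 2) * Tsup R ψ f t := by
            apply add_le_add
            · nth_rewrite 1 [← one_mul (dstar f t)]
              exact mul_le_mul_left h2 _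
            · exact mul_le_mul_left hCB' _
        _ = ENNReal.ofReal (CB + 2) * (Tsup R ψ f t + dstar f t) := by
            rw [mul_add]
            ring
end
end

section
/- Let 0 < R ≤ ∞ and let φ be a quasiconcave function on [0,R). Then there exists a constant C > 0 such that (S_φ f)**(t) ≤ C · S_φ(f**)(t) for every nonnegative nonincreasing measurable function f on (0,R) and every t ∈ (0,R) if and only if φ satisfies the B-condition. -/
open MeasureTheory Set ENNReal Filter

noncomputable section

lemma mem_dom {R : ℝ≥0∞} {t s : ℝ} (ht : t ∈ DomIoo R) (hs : s ∈ Ioo (0:ℝ) t) :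
    s ∈ DomIoo R :=
  ⟨hs.1, lt_of_le_of_lt (ENNReal.ofReal_le_ofReal hs.2.le) ht.2⟩

/-- `(S_φ f)** ≲ S_φ(f**)` holds for all nonneg. nonincreasing `f` iff `φ ∈ B`. -/
theorem statement9 (R : ℝ≥0∞) (hR : 0 < R) (φ : ℝ → ℝ≥0∞)
    (hφ : QuasiConcaveOn R φ) :
    (∃ C : ℝ, 0 < C ∧ ∀ f : ℝ → ℝ≥0∞, NonincOn R f → ∀ t ∈ DomIoo R,
        dstar (Ssup φ f) t ≤ ENNReal.ofReal C * Ssup φ (dstar f) t) ↔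
      BCond R φ := by
  obtain ⟨hφ0, hφpos, hφmono, hφqc⟩ := hφ
  constructor
  · -- forward: inequality ⇒ B-condition
    rintro ⟨C, hC, H⟩
    refine ⟨C, hC, fun t ht => ?_⟩
    have ht0 : (0:ℝ) < t := ht.1
    have hτ0 : ENNReal.ofReal t ≠ 0 := (ENNReal.ofReal_pos.mpr ht0).ne'
    have hτt : ENNReal.ofReal t ≠ ⊤ := ENNReal.ofReal_ne_top
    have hq := hφpos t ht
    -- a monotone measurable extension of φ
    set φt : ℝ → ℝ≥0∞ := fun s => if s ≤ 0 then 0 else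
      if ENNReal.ofReal s < R then φ s else ⊤ with hφt_def
    have hφt_eq : ∀ s ∈ DomIoo R, φt s = φ s := by
      intro s hs
      simp only [hφt_def, if_neg (not_le.mpr hs.1), if_pos hs.2]
    have hφt_mono : Monotone φt := by
      intro s u hsu
      by_cases hs0 : s ≤ 0
      · simp [hφt_def, hs0]
      · have hu0 : ¬ u ≤ 0 := fun h => hs0 (hsu.trans h)
        by_cases hu : ENNReal.ofReal u < R
        · have hs : ENNReal.ofReal s < R :=
            lt_of_le_of_lt (ENNReal.ofReal_le_ofReal hsu) hu
          simp only [hφt_def, if_neg hs0, if_neg hu0, if_pos hs, if_pos hu]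
          exact hφmono s u (le_of_not_ge hs0) hsu ⟨not_le.mp hu0, hu⟩
        · simp only [hφt_def, if_neg hu0, if_neg hu]
          exact le_top
    have hφt_meas : Measurable φt := hφt_mono.measurable
    -- key estimate for each a ∈ (0,t)
    have key : ∀ a ∈ Ioo (0:ℝ) t,
        (∫⁻ s in Ioo a t, 1 / φt s) ≤
          ENNReal.ofReal C * (ENNReal.ofReal t / φ t) := by
      intro a ha
      have haD : a ∈ DomIoo R := mem_dom ht ha
      have hφa := hφpos a haD
      set f : ℝ → ℝ≥0∞ := (Ioc (0:ℝ) a).indicator (fun _ => (1:ℝ≥0∞)) with hf_def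
      have hfN : NonincOn R f := by
        refine ⟨measurable_const.indicator measurableSet_Ioc, fun s u hs hsu hu => ?_⟩
        by_cases hmem : u ∈ Ioc (0:ℝ) a
        · have hsmem : s ∈ Ioc (0:ℝ) a := ⟨hs.1, hsu.trans hmem.2⟩
          simp [hf_def, indicator_of_mem hmem, indicator_of_mem hsmem]
        · simp [hf_def, indicator_of_notMem hmem]
      -- lower bound for Ssup φ f on (a, t)
      have hlow : ∀ s ∈ Ioo a t, φ a * (1 / φt s) ≤ Ssup φ f s := by
        intro s hs
        have hsD : s ∈ DomIoo R := mem_dom ht ⟨ha.1.trans hs.1, hs.2⟩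
        rw [hφt_eq s hsD]
        have h1 : φ a * (1 / φ s) = φ a / φ s := by
          rw [one_div, div_eq_mul_inv]
        rw [h1]
        refine ENNReal.div_le_div_right ?_ _
        have hfa : f a = 1 := by
          rw [hf_def]
          exact indicator_of_mem (show a ∈ Ioc (0:ℝ) a from ⟨ha.1, le_refl a⟩) _
        have := le_iSup₂ (f := fun u (_ : u ∈ Ioo (0:ℝ) s) => φ u * f u) a
          (⟨ha.1, hs.1⟩ : a ∈ Ioo (0:ℝ) s)
        simpa [hfa] using this
      -- upper bound for Ssup φ (dstar f) t
      have hup : Ssup φ (dstar f) t ≤ φ a / φ t := by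
        refine ENNReal.div_le_div_right (iSup₂_le fun s hs => ?_) _
        have hsD : s ∈ DomIoo R := mem_dom ht hs
        have hσ0 : ENNReal.ofReal s ≠ 0 := (ENNReal.ofReal_pos.mpr hs.1).ne'
        have hσt : ENNReal.ofReal s ≠ ⊤ := ENNReal.ofReal_ne_top
        have hV1 : (∫⁻ x in Ioo (0:ℝ) s, f x) ≤ ENNReal.ofReal s := by
          calc (∫⁻ x in Ioo (0:ℝ) s, f x)
              ≤ ∫⁻ _ in Ioo (0:ℝ) s, (1:ℝ≥0∞) :=
                lintegral_mono fun x => indicator_le_self _ _ x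
            _ = ENNReal.ofReal s := by
                rw [setLIntegral_const, one_mul, Real.volume_Ioo, sub_zero]
        have hV2 : (∫⁻ x in Ioo (0:ℝ) s, f x) ≤ ENNReal.ofReal a := by
          rw [hf_def, lintegral_indicator measurableSet_Ioc]
          calc (∫⁻ _ in Ioc (0:ℝ) a, (1:ℝ≥0∞) ∂(volume.restrict (Ioo 0 s)))
              = (volume.restrict (Ioo 0 s)) (Ioc 0 a) := by
                rw [setLIntegral_const, one_mul]
            _ = volume (Ioc (0:ℝ) a ∩ Ioo 0 s) := by
                rw [Measure.restrict_apply measurableSet_Ioc]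
            _ ≤ volume (Ioc (0:ℝ) a) := measure_mono inter_subset_left
            _ = ENNReal.ofReal a := by rw [Real.volume_Ioc, sub_zero]
        rcases le_or_gt s a with hsa | has
        · calc φ s * dstar f s ≤ φ s * (ENNReal.ofReal s / ENNReal.ofReal s) :=
                mul_le_mul_right (ENNReal.div_le_div_right hV1 _) _
            _ = φ s := by rw [ENNReal.div_self hσ0 hσt, mul_one]
            _ ≤ φ a := hφmono s a hs.1.le hsa haD
        · calc φ s * dstar f s ≤ φ s * (ENNReal.ofReal a / ENNReal.ofReal s) :=
                mul_le_mul_right (ENNReal.div_le_div_right hV2 _) _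
            _ = ENNReal.ofReal a * (φ s / ENNReal.ofReal s) := by
                rw [div_eq_mul_inv, div_eq_mul_inv]; ring
            _ ≤ ENNReal.ofReal a * (φ a / ENNReal.ofReal a) :=
                mul_le_mul_right (hφqc a s haD has.le hsD) _
            _ = φ a := ENNReal.mul_div_cancel' (fun h => absurd h (ENNReal.ofReal_pos.mpr ha.1).ne')
                (fun h => absurd h ENNReal.ofReal_ne_top)
      -- combine using the hypothesis
      have hmain : φ a * (∫⁻ s in Ioo a t, 1 / φt s) ≤
          (ENNReal.ofReal C * (φ a / φ t)) * ENNReal.ofReal t := by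
        have h1 : φ a * (∫⁻ s in Ioo a t, 1 / φt s) ≤
            ∫⁻ s in Ioo (0:ℝ) t, Ssup φ f s := by
          rw [← lintegral_const_mul' (φ a) _ hφa.2.ne]
          calc (∫⁻ s in Ioo a t, φ a * (1 / φt s))
              ≤ ∫⁻ s in Ioo a t, Ssup φ f s :=
                lintegral_mono_ae ((ae_restrict_mem measurableSet_Ioo).mono hlow)
            _ ≤ ∫⁻ s in Ioo (0:ℝ) t, Ssup φ f s :=
                lintegral_mono_set (Ioo_subset_Ioo_left ha.1.le)
        have h2 : dstar (Ssup φ f) t ≤ ENNReal.ofReal C * (φ a / φ t) :=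
          (H f hfN t ht).trans (mul_le_mul_right hup _)
        have h3 : (∫⁻ s in Ioo (0:ℝ) t, Ssup φ f s) ≤
            (ENNReal.ofReal C * (φ a / φ t)) * ENNReal.ofReal t := by
          have := mul_le_mul_left h2 (ENNReal.ofReal t)
          rwa [dstar, ENNReal.div_mul_cancel hτ0 hτt] at this
        exact h1.trans h3
      have hrw : (ENNReal.ofReal C * (φ a / φ t)) * ENNReal.ofReal t =
          φ a * (ENNReal.ofReal C * (ENNReal.ofReal t / φ t)) := by
        rw [div_eq_mul_inv, div_eq_mul_inv]; ring
      rw [hrw] at hmain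
      exact (ENNReal.mul_le_mul_iff_right hφa.1.ne' hφa.2.ne).mp hmain
    -- let a ↓ 0 by monotone convergence
    set g : ℕ → ℝ → ℝ≥0∞ :=
      fun n => (Ioo (t / (n + 2)) t).indicator (fun s => 1 / φt s) with hg_def
    have hgmeas : ∀ n, Measurable (g n) := by
      intro n
      have : Measurable fun s => 1 / φt s := by
        simp only [one_div]; exact hφt_meas.inv
      exact this.indicator measurableSet_Ioo
    have hn2pos : ∀ n : ℕ, (0:ℝ) < (n:ℝ) + 2 := fun n => by positivity
    have hgmono : Monotone g := by
      intro n m hnm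
      refine indicator_le_indicator_of_subset (Ioo_subset_Ioo_left ?_) (fun _ => zero_le)
      exact div_le_div_of_nonneg_left ht0.le (hn2pos n)
        (by have := (Nat.cast_le (α := ℝ)).mpr hnm; linarith)
    have hsub : ∀ n : ℕ, Ioo (t / (n + 2)) t ⊆ Ioo (0:ℝ) t :=
      fun n => Ioo_subset_Ioo_left (le_of_lt (div_pos ht0 (hn2pos n)))
    have hgsup : ∀ s, (⨆ n, g n s) = (Ioo (0:ℝ) t).indicator (fun s => 1 / φt s) s := by
      intro s
      by_cases hs : s ∈ Ioo (0:ℝ) t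
      · obtain ⟨n, hn⟩ := exists_nat_gt (t / s)
        have hns : t / ((n:ℝ) + 2) < s := by
          rw [div_lt_iff₀ (hn2pos n)]
          calc t = (t / s) * s := (div_mul_cancel₀ t hs.1.ne').symm
            _ < ((n:ℝ)) * s := by
                exact mul_lt_mul_of_pos_right hn hs.1
            _ ≤ ((n:ℝ) + 2) * s := by nlinarith [hs.1]
            _ = s * ((n:ℝ) + 2) := mul_comm _ _
        refine le_antisymm (iSup_le fun m => ?_) ?_
        · exact (indicator_le_indicator_of_subset (hsub m) (fun _ => zero_le)) s
        · have : g n s = 1 / φt s := by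
            rw [hg_def]
            exact indicator_of_mem
              (show s ∈ Ioo (t / ((n:ℝ) + 2)) t from ⟨hns, hs.2⟩) _
          rw [indicator_of_mem hs]
          exact this ▸ le_iSup (fun n => g n s) n
      · have : ∀ n, g n s = 0 := fun n =>
          indicator_of_notMem (fun hmem => hs (hsub n hmem)) _
        simp [this, indicator_of_notMem hs]
    have hMCT : (∫⁻ s in Ioo (0:ℝ) t, 1 / φt s) =
        ⨆ n : ℕ, ∫⁻ s in Ioo (t / ((n:ℝ) + 2)) t, 1 / φt s := by
      calc (∫⁻ s in Ioo (0:ℝ) t, 1 / φt s)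
          = ∫⁻ s, (Ioo (0:ℝ) t).indicator (fun s => 1 / φt s) s :=
            (lintegral_indicator measurableSet_Ioo _).symm
        _ = ∫⁻ s, ⨆ n, g n s := by simp_rw [hgsup]
        _ = ⨆ n, ∫⁻ s, g n s := lintegral_iSup hgmeas hgmono
        _ = ⨆ n : ℕ, ∫⁻ s in Ioo (t / ((n:ℝ) + 2)) t, 1 / φt s := by
            refine iSup_congr fun n => ?_
            rw [hg_def, lintegral_indicator measurableSet_Ioo]
    have hcongr : (∫⁻ s in Ioo (0:ℝ) t, 1 / φ s) = ∫⁻ s in Ioo (0:ℝ) t, 1 / φt s := by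
      refine lintegral_congr_ae ?_
      refine (ae_restrict_mem measurableSet_Ioo).mono fun s hs => ?_
      show 1 / φ s = 1 / φt s
      rw [hφt_eq s (mem_dom ht hs)]
    rw [hcongr, hMCT]
    refine iSup_le fun n => key _ ⟨div_pos ht0 (hn2pos n), ?_⟩
    rw [div_lt_iff₀ (hn2pos n)]
    nlinarith [ht0]
  · -- backward: B-condition ⇒ inequality
    rintro ⟨C, hC, hB⟩
    refine ⟨C, hC, fun f hf t ht => ?_⟩
    have ht0 : (0:ℝ) < t := ht.1
    have hτ0 : ENNReal.ofReal t ≠ 0 := (ENNReal.ofReal_pos.mpr ht0).ne'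
    have hτt : ENNReal.ofReal t ≠ ⊤ := ENNReal.ofReal_ne_top
    have hq := hφpos t ht
    set A : ℝ≥0∞ := ⨆ s ∈ Ioo (0:ℝ) t, φ s * dstar f s with hA_def
    have hSdef : Ssup φ (dstar f) t = A / φ t := rfl
    by_cases hA : A = ⊤
    · rw [hSdef, hA, ENNReal.top_div_of_ne_top hq.2.ne,
        ENNReal.mul_top (ENNReal.ofReal_pos.mpr hC).ne']
      exact le_top
    · -- pointwise bound Ssup φ f s ≤ A / φ s on (0,t)
      have hpt : ∀ s ∈ Ioo (0:ℝ) t, Ssup φ f s ≤ A / φ s := by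
        intro s hs
        refine ENNReal.div_le_div_right (iSup₂_le fun u hu => ?_) _
        have hu' : u ∈ Ioo (0:ℝ) t := ⟨hu.1, hu.2.trans hs.2⟩
        have huD : u ∈ DomIoo R := mem_dom ht hu'
        have hν0 : ENNReal.ofReal u ≠ 0 := (ENNReal.ofReal_pos.mpr hu.1).ne'
        have hνt : ENNReal.ofReal u ≠ ⊤ := ENNReal.ofReal_ne_top
        have hfd : f u ≤ dstar f u := by
          have hc : f u * ENNReal.ofReal u ≤ ∫⁻ x in Ioo (0:ℝ) u, f x := by
            have heq : (∫⁻ _ in Ioo (0:ℝ) u, f u) = f u * ENNReal.ofReal u := by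
              rw [setLIntegral_const, Real.volume_Ioo, sub_zero]
            rw [← heq]
            refine lintegral_mono_ae ((ae_restrict_mem measurableSet_Ioo).mono
              fun v hv => ?_)
            exact hf.2 v u (mem_dom ht ⟨hv.1, hv.2.trans hu'.2⟩) hv.2.le huD
          calc f u = (f u * ENNReal.ofReal u) / ENNReal.ofReal u := by
                rw [mul_div_assoc, ENNReal.div_self hν0 hνt, mul_one]
            _ ≤ dstar f u := ENNReal.div_le_div_right hc _
        calc φ u * f u ≤ φ u * dstar f u := mul_le_mul_right hfd _
          _ ≤ A := le_iSup₂ (f := fun s (_ : s ∈ Ioo (0:ℝ) t) => φ s * dstar f s) u hu'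
      calc dstar (Ssup φ f) t
          = (∫⁻ s in Ioo (0:ℝ) t, Ssup φ f s) / ENNReal.ofReal t := rfl
        _ ≤ (∫⁻ s in Ioo (0:ℝ) t, A / φ s) / ENNReal.ofReal t :=
            ENNReal.div_le_div_right
              (lintegral_mono_ae ((ae_restrict_mem measurableSet_Ioo).mono hpt)) _
        _ = (A * ∫⁻ s in Ioo (0:ℝ) t, 1 / φ s) / ENNReal.ofReal t := by
            rw [← lintegral_const_mul' A _ hA]
            congr 1
            refine lintegral_congr fun s => ?_
            rw [one_div, div_eq_mul_inv]
        _ ≤ (A * (ENNReal.ofReal C * (ENNReal.ofReal t / φ t))) / ENNReal.ofReal t :=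
            ENNReal.div_le_div_right (mul_le_mul_right (hB t ht) _) _
        _ = ENNReal.ofReal C * (A / φ t) := by
            rw [show A * (ENNReal.ofReal C * (ENNReal.ofReal t / φ t)) =
              (ENNReal.ofReal C * (A / φ t)) * ENNReal.ofReal t from by
                rw [div_eq_mul_inv, div_eq_mul_inv]; ring,
              mul_div_assoc, ENNReal.div_self hτ0 hτt, mul_one]
        _ = ENNReal.ofReal C * Ssup φ (dstar f) t := by rw [hSdef]
end
end
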